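/- Fix a rational n₀ and a point O = (m₀, k₀) on the quadric x² + n₀² + z² = 3x n₀ z. Let (x₁, z₁) and (x₂, z₂) be two points on the quadric with x₁ ≠ x₂, and set μ = (z₂ − z₁)/(x₂ − x₁). Assume 1 + μ² − 3n₀μ ≠ 0. Then the point (x, z) with x = (μ²m₀ − m₀ − 2μk₀ + 3n₀k₀)/(1 + μ² − 3n₀μ) and z = (k₀ − 2m₀μ − μ²k₀ + 3m₀n₀μ²)/(1 + μ² − 3n₀μ) satisfies x² + n₀² + z² = 3x n₀ z. -/

import Mathlib

set_option maxHeartbeats 2000000 in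
set_option maxRecDepth 4000 in

lemma quadric_aux (n₀ m₀ k₀ μ : ℚ)
    (hO : m₀^2 + n₀^2 + k₀^2 = 3*m₀*n₀*k₀)
    (hden : 1 + μ^2 - 3*n₀*μ ≠ 0) :
    ((μ^2*m₀ - m₀ - 2*μ*k₀ + 3*n₀*k₀) / (1 + μ^2 - 3*n₀*μ))^2 + n₀^2 +
    ((k₀ - 2*m₀*μ - μ^2*k₀ + 3*m₀*n₀*μ^2) / (1 + μ^2 - 3*n₀*μ))^2 =
    3 * ((μ^2*m₀ - m₀ - 2*μ*k₀ + 3*n₀*k₀) / (1 + μ^2 - 3*n₀*μ)) * n₀ *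
    ((k₀ - 2*m₀*μ - μ^2*k₀ + 3*m₀*n₀*μ^2) / (1 + μ^2 - 3*n₀*μ)) := by
  field_simp
  have hD : (1 + μ ^ 2 - μ * 3 * n₀) ≠ 0 := by convert hden using 2; ring
  field_simp
  linear_combination ((1 + μ^2 - 3*n₀*μ)^2) * hO

theorem quadric_addition (n₀ m₀ k₀ x₁ z₁ x₂ z₂ : ℚ)
    (hO : m₀^2 + n₀^2 + k₀^2 = 3*m₀*n₀*k₀)
    (hP₁ : x₁^2 + n₀^2 + z₁^2 = 3*x₁*n₀*z₁)
    (hP₂ : x₂^2 + n₀^2 + z₂^2 = 3*x₂*n₀*z₂)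
    (hx : x₁ ≠ x₂)
    (hden : 1 + ((z₂ - z₁)/(x₂ - x₁))^2 - 3*n₀*((z₂ - z₁)/(x₂ - x₁)) ≠ 0) :
    ((((z₂ - z₁)/(x₂ - x₁))^2*m₀ - m₀ - 2*((z₂ - z₁)/(x₂ - x₁))*k₀ + 3*n₀*k₀) /
      (1 + ((z₂ - z₁)/(x₂ - x₁))^2 - 3*n₀*((z₂ - z₁)/(x₂ - x₁))))^2 + n₀^2 +
    ((k₀ - 2*m₀*((z₂ - z₁)/(x₂ - x₁)) - ((z₂ - z₁)/(x₂ - x₁))^2*k₀ +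
        3*m₀*n₀*((z₂ - z₁)/(x₂ - x₁))^2) /
      (1 + ((z₂ - z₁)/(x₂ - x₁))^2 - 3*n₀*((z₂ - z₁)/(x₂ - x₁))))^2 =
    3 * ((((z₂ - z₁)/(x₂ - x₁))^2*m₀ - m₀ - 2*((z₂ - z₁)/(x₂ - x₁))*k₀ + 3*n₀*k₀) /
      (1 + ((z₂ - z₁)/(x₂ - x₁))^2 - 3*n₀*((z₂ - z₁)/(x₂ - x₁)))) * n₀ *
    ((k₀ - 2*m₀*((z₂ - z₁)/(x₂ - x₁)) - ((z₂ - z₁)/(x₂ - x₁))^2*k₀ +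
        3*m₀*n₀*((z₂ - z₁)/(x₂ - x₁))^2) /
      (1 + ((z₂ - z₁)/(x₂ - x₁))^2 - 3*n₀*((z₂ - z₁)/(x₂ - x₁)))) := by
  exact quadric_aux n₀ m₀ k₀ _ hO hden
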